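/- arXiv:1204.1350 — 2 statements merged into one kernel-verified Lean document; each statement's English description precedes it below -/
import Mathlib

section
/- Let F be an ordered field and d ≥ 3. If A is an almost Lorentz transformation of F^d, i.e., a linear bijection with μ²₁(A(x)) = λ·μ²₁(x) for all x ∈ F^d and some fixed λ ≠ 0, then λ > 0. -/
/-- The Minkowski quadratic form `μ²₁` on `F^d`, `d = d' + 3 ≥ 3`. -/
def mink {F : Type*} [Field F] [LinearOrder F] [IsStrictOrderedRing F] {d : ℕ} (x : Fin (d + 3) → F) : F :=
  x 0 ^ 2 - ∑ i ∈ Finset.univ.erase 0, x i ^ 2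

/-- Over an ordered field in dimension `d ≥ 3`, the ratio `λ` of any almost Lorentz
transformation is positive. -/
theorem stmt_13 {F : Type*} [Field F] [LinearOrder F] [IsStrictOrderedRing F] {d : ℕ}
    (A : (Fin (d + 3) → F) → (Fin (d + 3) → F))
    (hbij : Function.Bijective A)
    (hadd : ∀ x y, A (x + y) = A x + A y)
    (hsmul : ∀ (c : F) (x), A (c • x) = c • A x)
    (l : F) (hl : l ≠ 0)
    (hμ : ∀ x, mink (A x) = l * mink x) :
    0 < l := by
  -- package A as a linear map
  set L : (Fin (d + 3) → F) →ₗ[F] (Fin (d + 3) → F) :=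
    { toFun := A, map_add' := hadd, map_smul' := hsmul } with hL
  -- the map x ↦ (x 0, (A x) 0)
  set φ : (Fin (d + 3) → F) →ₗ[F] F × F :=
    (LinearMap.proj 0).prod ((LinearMap.proj 0).comp L) with hφ
  have hninj : ¬ Function.Injective φ := by
    intro h
    have h1 := LinearMap.finrank_le_finrank_of_injective h
    simp only [Module.finrank_prod, Module.finrank_self, Module.finrank_pi,
      Fintype.card_fin] at h1
    omega
  rw [Function.not_injective_iff] at hninj
  obtain ⟨x, y, hxy, hne⟩ := hninj
  set z := x - y with hz
  have hz0 : z ≠ 0 := sub_ne_zero_of_ne hne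
  have hφz : φ z = 0 := by rw [map_sub, hxy, sub_self]
  have hz00 : z 0 = 0 := congrArg Prod.fst hφz
  have hAz0 : (A z) 0 = 0 := congrArg Prod.snd hφz
  -- mink z < 0
  have hsum_pos : ∀ (w : Fin (d + 3) → F), w 0 = 0 → w ≠ 0 →
      0 < ∑ i ∈ Finset.univ.erase 0, w i ^ 2 := by
    intro w hw0 hw
    obtain ⟨j, hj⟩ := Function.ne_iff.mp hw
    have hjne : j ≠ 0 := by rintro rfl; exact hj hw0
    refine Finset.sum_pos' (fun i _ => sq_nonneg _) ⟨j, ?_, ?_⟩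
    · exact Finset.mem_erase.mpr ⟨hjne, Finset.mem_univ _⟩
    · have hjj : w j ≠ 0 := by simpa using hj
      simpa [sq_abs] using pow_pos (abs_pos.mpr hjj) 2
  have hmz : mink z < 0 := by
    have := hsum_pos z hz00 hz0
    simp only [mink, hz00]
    nlinarith
  have hAzne : A z ≠ 0 := by
    intro h
    have hA0 : A 0 = 0 := by simpa using hsmul 0 0
    exact hz0 (hbij.injective (h.trans hA0.symm))
  have hmAz : mink (A z) < 0 := by
    have := hsum_pos (A z) hAz0 hAzne
    simp only [mink, hAz0]
    nlinarith
  have hμz := hμ z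
  by_contra hcon
  push_neg at hcon
  have hl' : l < 0 := lt_of_le_of_ne hcon hl
  linarith [mul_pos_of_neg_of_neg hl' hmz]
end

section
/- Let F be a Euclidean ordered field and d ≥ 3. Then every almost Lorentz transformation A of F^d (linear bijection with μ²₁(A(x)) = λ·μ²₁(x), λ ≠ 0) is the composition of a Lorentz transformation and a dilation: there exist a ∈ F, a > 0, and a Lorentz transformation L with A(x) = a·L(x) for all x. -/
lemma mink_smul {F : Type*} [Field F] [LinearOrder F] [IsStrictOrderedRing F] {d : ℕ} (c : F) (x : Fin (d + 3) → F) :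
    mink (c • x) = c ^ 2 * mink x := by
  simp [mink, mul_pow, Finset.mul_sum, mul_sub]

lemma mink_sum_nonneg {F : Type*} [Field F] [LinearOrder F] [IsStrictOrderedRing F] {d : ℕ} (x : Fin (d + 3) → F) :
    0 ≤ ∑ i ∈ Finset.univ.erase 0, x i ^ 2 :=
  Finset.sum_nonneg fun _ _ => sq_nonneg _

lemma mink_plane {F : Type*} [Field F] [LinearOrder F] [IsStrictOrderedRing F] {d : ℕ} (c₁ c₂ : F) :
    mink (c₁ • ((Pi.single (1 : Fin (d+3)) (1:F)) : Fin (d+3) → F) + c₂ • ((Pi.single (2 : Fin (d+3)) (1:F)) : Fin (d+3) → F))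
      = -(c₁^2 + c₂^2) := by
  set x : Fin (d+3) → F :=
    c₁ • ((Pi.single (1 : Fin (d+3)) (1:F)) : Fin (d+3) → F) + c₂ • ((Pi.single (2 : Fin (d+3)) (1:F)) : Fin (d+3) → F) with hx
  have h0 : x 0 = 0 := by simp [hx, Pi.single_apply, Fin.ext_iff, show 2 % (d+3) = 2 from Nat.mod_eq_of_lt (by omega)]
  have hs : ∑ i ∈ Finset.univ.erase 0, x i ^ 2 = c₁^2 + c₂^2 := by
    rw [← Finset.add_sum_erase _ _ (show (1 : Fin (d+3)) ∈ Finset.univ.erase 0 by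
      simp [Fin.ext_iff])]
    rw [← Finset.add_sum_erase _ _ (show (2 : Fin (d+3)) ∈ (Finset.univ.erase 0).erase 1 by
      simp [Fin.ext_iff, show 2 % (d+3) = 2 from Nat.mod_eq_of_lt (by omega)])]
    have hz : ∑ i ∈ ((Finset.univ.erase 0).erase 1).erase 2, x i ^ 2 = 0 := by
      apply Finset.sum_eq_zero
      intro i hi
      simp only [Finset.mem_erase] at hi
      simp [hx, Pi.single_apply, hi.1, hi.2.1, hi.2.2]
    rw [hz]
    simp [hx, Pi.single_apply, Fin.ext_iff, show 2 % (d+3) = 2 from Nat.mod_eq_of_lt (by omega)]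
    try ring
  simp [mink, h0, hs]

/-- Over a Euclidean ordered field in dimension `d ≥ 3`, every almost Lorentz transformation
is the composition of a Lorentz transformation and a dilation by a positive scalar. -/
theorem stmt_15 {F : Type*} [Field F] [LinearOrder F] [IsStrictOrderedRing F]
    (heu : ∀ x : F, 0 < x → ∃ y : F, y ^ 2 = x) {d : ℕ}
    (A : (Fin (d + 3) → F) → (Fin (d + 3) → F))
    (hbij : Function.Bijective A)
    (hadd : ∀ x y, A (x + y) = A x + A y)
    (hsmul : ∀ (c : F) (x), A (c • x) = c • A x)
    (l : F) (hl : l ≠ 0)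
    (hμ : ∀ x, mink (A x) = l * mink x) :
    ∃ (a : F) (L : (Fin (d + 3) → F) → (Fin (d + 3) → F)),
      0 < a ∧
      Function.Bijective L ∧
      (∀ x y, L (x + y) = L x + L y) ∧
      (∀ (c : F) (x), L (c • x) = c • L x) ∧
      (∀ x, mink (L x) = mink x) ∧
      (∀ x, A x = a • L x) := by
  -- Step 1 : l > 0
  have hlpos : 0 < l := by
    rcases lt_or_gt_of_ne hl with hneg | hpos
    · exfalso
      set e₁ : Fin (d+3) → F := (Pi.single (1 : Fin (d+3)) (1:F) : Fin (d+3) → F)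
      set e₂ : Fin (d+3) → F := (Pi.single (2 : Fin (d+3)) (1:F) : Fin (d+3) → F)
      have key : ∀ c₁ c₂ : F, mink (A (c₁ • e₁ + c₂ • e₂)) = l * (-(c₁^2 + c₂^2)) := by
        intro c₁ c₂; rw [hμ, mink_plane]
      have hu : 0 < mink (A e₁) := by
        have := key 1 0
        simp at this
        rw [show A e₁ = A ((1:F) • e₁ + (0:F) • e₂) by simp, key 1 0]
        nlinarith
      set u := A e₁
      set v := A e₂
      have hu0 : u 0 ≠ 0 := by
        intro h
        have : mink u = 0 ^ 2 - ∑ i ∈ Finset.univ.erase 0, u i ^ 2 := by rw [mink, h]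
        have hsn := mink_sum_nonneg u
        nlinarith
      have hw : A ((v 0) • e₁ + (-(u 0)) • e₂) = (v 0) • u - (u 0) • v := by
        rw [hadd, hsmul, hsmul]; module
      have hwpos : 0 < mink ((v 0) • u - (u 0) • v) := by
        rw [← hw, key]
        have : 0 < (v 0)^2 + (u 0)^2 := by positivity
        nlinarith
      have hw0 : ((v 0) • u - (u 0) • v) 0 = 0 := by
        simp [mul_comm]
      rw [mink, hw0] at hwpos
      have hsn := mink_sum_nonneg ((v 0) • u - (u 0) • v)
      nlinarith
    · exact hpos
  -- Step 2 : get square root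
  obtain ⟨a₀, ha₀⟩ := heu l hlpos
  have ha₀ne : a₀ ≠ 0 := by rintro rfl; simp at ha₀; exact hl ha₀.symm
  set a := |a₀| with ha
  have hapos : 0 < a := abs_pos.mpr ha₀ne
  have ha2 : a ^ 2 = l := by rw [ha, sq_abs, ha₀]
  have hane : a ≠ 0 := ne_of_gt hapos
  refine ⟨a, fun x => a⁻¹ • A x, hapos, ?_, ?_, ?_, ?_, ?_⟩
  · constructor
    · intro x y hxy
      apply hbij.1
      have := smul_right_injective (Fin (d+3) → F) (inv_ne_zero hane) hxy
      exact this
    · intro y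
      obtain ⟨x, hx⟩ := hbij.2 (a • y)
      exact ⟨x, by dsimp only; rw [hx, smul_smul, inv_mul_cancel₀ hane, one_smul]⟩
  · intro x y; dsimp only; rw [hadd, smul_add]
  · intro c x; dsimp only; rw [hsmul, smul_comm]
  · intro x
    dsimp only
    rw [mink_smul, hμ, ← ha2]
    field_simp
  · intro x
    dsimp only
    rw [smul_smul, mul_inv_cancel₀ hane, one_smul]
end
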